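/- For ρ ∈ [0,1), the function ρ ↦ P(Z₁ > b₁, Z₂ > b₂), where (Z₁,Z₂) is bivariate standard normal with correlation ρ and 0 ≤ b₂ ≤ b₁, is monotone nondecreasing in ρ. -/

import Mathlib

open MeasureTheory ProbabilityTheory

open MeasureTheory ProbabilityTheory Real Complex Set Filter Topology FourierTransform
open scoped NNReal ENNReal RealInnerProductSpace

open scoped NNReal ENNReal

lemma integral_cexp_gaussianReal (v : ℝ≥0) (t : ℝ) :
    ∫ x : ℝ, Complex.exp (t * x * Complex.I) ∂(gaussianReal 0 v)
      = Complex.exp (-(v : ℝ) * t ^ 2 / 2) := by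
  by_cases hv : v = 0
  · subst hv
    rw [gaussianReal_zero_var]
    rw [integral_dirac]
    simp
  · rw [gaussianReal_of_var_ne_zero _ hv, gaussianPDF_def]
    have hmeas : Measurable (fun x => Real.toNNReal (gaussianPDFReal 0 v x)) :=
      (measurable_gaussianPDFReal 0 v).real_toNNReal
    have hrw : (fun x => ENNReal.ofReal (gaussianPDFReal 0 v x))
        = fun x => ((Real.toNNReal (gaussianPDFReal 0 v x) : ℝ≥0) : ENNReal) := rfl
    rw [hrw, integral_withDensity_eq_integral_smul hmeas]
    have hv0 : (0 : ℝ) < (v : ℝ) := by positivity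
    have hsq : (0:ℝ) < 2 * π * v := by positivity
    have hb : ((-(1/(2*(v:ℝ))) : ℂ)).re < 0 := by
      simp only [neg_re, one_div, neg_neg, neg_lt_zero]
      norm_num
      positivity
    have key : ∀ x : ℝ, (Real.toNNReal (gaussianPDFReal 0 v x) : ℝ≥0)
          • Complex.exp (t * x * Complex.I)
        = ((Real.sqrt (2 * π * v))⁻¹ : ℂ)
          * Complex.exp ((-(1/(2*(v:ℝ))) : ℂ) * x ^ 2 + (t * Complex.I) * x + 0) := by
      intro x
      rw [NNReal.smul_def, Real.coe_toNNReal _ (gaussianPDFReal_nonneg 0 v x)]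
      rw [gaussianPDFReal_def]
      simp only [sub_zero]
      rw [Complex.real_smul]
      push_cast
      rw [mul_assoc, ← Complex.exp_add]
      congr 2
      have : ((v:ℝ):ℂ) ≠ 0 := by exact_mod_cast hv0.ne'
      field_simp
      ring
    simp_rw [key]
    rw [integral_const_mul, integral_cexp_quadratic hb]
    have hπb : (↑π / -(-(1/(2*(v:ℝ))) : ℂ)) = ((2 * π * v : ℝ) : ℂ) := by
      have : ((v:ℝ):ℂ) ≠ 0 := by exact_mod_cast hv0.ne'
      push_cast
      field_simp
    rw [hπb]
    have hcpow : ((2 * π * v : ℝ) : ℂ) ^ (1/2 : ℂ) = ((Real.sqrt (2 * π * v) : ℝ) : ℂ) := by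
      have h2 : ((1:ℂ)/2) = ((1/2 : ℝ) : ℂ) := by norm_num
      rw [h2, ← Complex.ofReal_cpow hsq.le, ← Real.sqrt_eq_rpow]
    rw [hcpow]
    have hs : ((Real.sqrt (2*π*v) : ℝ) : ℂ) ≠ 0 := by
      exact_mod_cast (Real.sqrt_pos.mpr hsq).ne'
    rw [← mul_assoc, inv_mul_cancel₀ hs, one_mul]
    congr 1
    have hvc : ((v:ℝ):ℂ) ≠ 0 := by exact_mod_cast hv0.ne'
    rw [mul_pow, Complex.I_sq]
    push_cast
    field_simp
    ring

/-- A smooth compactly supported real function, viewed as a complex Schwartz function. -/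
noncomputable def bumpToSchwartz (f : ℝ → ℝ) (hf : ContDiff ℝ ((⊤ : ℕ∞) : WithTop ℕ∞) f)
    (h : HasCompactSupport f) : SchwartzMap ℝ ℂ where
  toFun x := (f x : ℂ)
  smooth' := Complex.ofRealCLM.contDiff.comp hf
  decay' := by
    intro k n
    have hsmooth : ContDiff ℝ ((⊤ : ℕ∞) : WithTop ℕ∞) (fun x : ℝ => (f x : ℂ)) :=
      Complex.ofRealCLM.contDiff.comp hf
    have hcs : HasCompactSupport (fun x : ℝ => (f x : ℂ)) :=
      h.comp_left (g := fun r : ℝ => (r : ℂ)) Complex.ofReal_zero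
    have hgc : Continuous (fun x : ℝ =>
        ‖x‖ ^ k * ‖iteratedFDeriv ℝ n (fun x : ℝ => (f x : ℂ)) x‖) :=
      ((continuous_id.norm).pow k).mul
        ((hsmooth.continuous_iteratedFDeriv (by exact_mod_cast le_top)).norm)
    have hgs : HasCompactSupport (fun x : ℝ =>
        ‖x‖ ^ k * ‖iteratedFDeriv ℝ n (fun x : ℝ => (f x : ℂ)) x‖) :=
      ((hcs.iteratedFDeriv n).norm).mul_left
    obtain ⟨x₀, hx₀⟩ := hgc.exists_forall_ge_of_hasCompactSupport hgs
    exact ⟨‖x₀‖ ^ k * ‖iteratedFDeriv ℝ n (fun x : ℝ => (f x : ℂ)) x₀‖, fun x => hx₀ x⟩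

lemma bumpToSchwartz_apply (f : ℝ → ℝ) (hf : ContDiff ℝ ((⊤ : ℕ∞) : WithTop ℕ∞) f)
    (h : HasCompactSupport f)
    (x : ℝ) : bumpToSchwartz f hf h x = (f x : ℂ) := rfl

/-- A bump function which is `1` on `[b + 1/(n+1), b + 1/(n+1) + 2(n+1)]` and vanishes
outside `(b, b + 2/(n+1) + 2(n+1))`. -/
noncomputable def bumpSeq (b : ℝ) (n : ℕ) : ContDiffBump (b + 1/(n+1 : ℝ) + (n+1 : ℝ)) where
  rIn := (n+1 : ℝ)
  rOut := (n+1 : ℝ) + 1/(n+1 : ℝ)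
  rIn_pos := by positivity
  rIn_lt_rOut := lt_add_of_pos_right _ (by positivity)

lemma bumpSeq_zero {b x : ℝ} (hx : x ≤ b) (n : ℕ) : bumpSeq b n x = 0 := by
  have h0 : (0:ℝ) < 1/(n+1:ℝ) := by positivity
  apply ContDiffBump.zero_of_le_dist
  have hd : dist x (b + 1/(n+1:ℝ) + (n+1:ℝ)) = b + 1/(n+1:ℝ) + (n+1:ℝ) - x := by
    rw [Real.dist_eq, abs_sub_comm, _root_.abs_of_nonneg]
    have : (0:ℝ) < (n+1:ℝ) := by positivity
    linarith
  rw [hd]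
  simp only [bumpSeq]
  linarith

lemma bumpSeq_tendsto (b x : ℝ) :
    Filter.Tendsto (fun n : ℕ => (bumpSeq b n x : ℝ)) Filter.atTop
      (𝓝 (Set.indicator (Set.Ioi b) (fun _ => (1:ℝ)) x)) := by
  rcases le_or_gt x b with hx | hx
  · have : ∀ n : ℕ, bumpSeq b n x = 0 := fun n => bumpSeq_zero hx n
    simp only [this]
    have : Set.indicator (Set.Ioi b) (fun _ => (1:ℝ)) x = 0 := by
      apply Set.indicator_of_notMem
      simpa using hx
    rw [this]
    exact tendsto_const_nhds
  · have : Set.indicator (Set.Ioi b) (fun _ => (1:ℝ)) x = 1 :=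
      Set.indicator_of_mem hx (fun _ => 1)
    rw [this]
    apply tendsto_const_nhds.congr'
    obtain ⟨N, hN⟩ := exists_nat_gt (max (1/(x - b)) (|x - b|))
    filter_upwards [Filter.eventually_ge_atTop N] with n hn
    have hn1 : (0:ℝ) < (n+1:ℝ) := by positivity
    have hNn : (N:ℝ) ≤ (n:ℝ) := by exact_mod_cast hn
    have h1 : 1/(n+1:ℝ) ≤ x - b := by
      rw [div_le_iff₀ hn1]
      have h1' : 1/(x-b) < (n+1:ℝ) := lt_of_le_of_lt (le_max_left _ _)
        (by linarith [hN])
      rw [div_lt_iff₀ (by linarith : (0:ℝ) < x - b)] at h1'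
      linarith
    have h2 : x - b ≤ (n+1:ℝ) := by
      have := lt_of_le_of_lt (le_max_right (1/(x-b)) (|x - b|)) hN
      have := le_abs_self (x - b)
      linarith
    symm
    apply ContDiffBump.one_of_mem_closedBall
    rw [Metric.mem_closedBall, Real.dist_eq]
    rw [abs_le]
    have h3 : (0:ℝ) < 1/(n+1:ℝ) := by positivity
    constructor
    · simp only [bumpSeq]; linarith
    · simp only [bumpSeq]; linarith

/-- The negated standard bilinear pairing on `ℝ × ℝ`. -/
noncomputable def Lneg : (ℝ×ℝ) →ₗ[ℝ] (ℝ×ℝ) →ₗ[ℝ] ℝ :=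
  -(LinearMap.mk₂ ℝ (fun x ξ => x.1*ξ.1 + x.2*ξ.2)
    (fun x y ξ => by simp; ring) (fun c x ξ => by simp; ring)
    (fun x ξ η => by simp; ring) (fun c x ξ => by simp; ring))

lemma Lneg_apply (x ξ : ℝ×ℝ) : Lneg x ξ = -(x.1*ξ.1 + x.2*ξ.2) := rfl

lemma Lneg_cont : Continuous fun p : (ℝ×ℝ)×(ℝ×ℝ) => Lneg p.1 p.2 := by
  simp only [Lneg_apply]
  fun_prop

/-- One-dimensional inversion: recovering a Schwartz function from its Fourier transform. -/
lemma schwartz_inv (u : SchwartzMap ℝ ℂ) (x : ℝ) :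
    ∫ ξ : ℝ, Complex.exp (((2*π*(ξ*x) : ℝ) : ℂ) * Complex.I)
      * (SchwartzMap.fourierTransformCLM ℂ u) ξ = u x := by
  have hint : Integrable (𝓕 ⇑u) := by
    rw [← SchwartzMap.fourier_coe]
    exact (𝓕 u).integrable
  have h := u.continuous.fourierInv_fourier_eq u.integrable hint
  have h2 : 𝓕⁻ (𝓕 ⇑u) x = u x := by rw [h]
  rw [← h2, Real.fourierInv_eq']
  simp_rw [SchwartzMap.fourierTransformCLM_apply, SchwartzMap.fourier_coe, RCLike.inner_apply, starRingEnd_apply,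
    star_trivial, smul_eq_mul]
  congr 1; funext ξ; rw [mul_comm x ξ]

/-- Integral of a product of Schwartz functions against a probability measure, expressed
through the "characteristic function" of the measure. -/
lemma integral_tensor_eq (ν : Measure (ℝ×ℝ)) [IsProbabilityMeasure ν]
    (u v : SchwartzMap ℝ ℂ) :
    ∫ p, u p.1 * v p.2 ∂ν =
      ∫ q : ℝ×ℝ, (SchwartzMap.fourierTransformCLM ℂ u) q.1
          * (SchwartzMap.fourierTransformCLM ℂ v) q.2
          * (∫ p, Complex.exp (((2*π*(q.1*p.1 + q.2*p.2) : ℝ) : ℂ) * Complex.I) ∂ν) := by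
  set uh := SchwartzMap.fourierTransformCLM ℂ u with huh0
  set vh := SchwartzMap.fourierTransformCLM ℂ v with hvh
  have hf : Integrable (fun q : ℝ×ℝ => uh q.1 * vh q.2) (volume : Measure (ℝ×ℝ)) := by
    rw [Measure.volume_eq_prod]
    exact uh.integrable.mul_prod vh.integrable
  have key := VectorFourier.integral_fourierIntegral_smul_eq_flip
    (e := Real.fourierChar) (L := Lneg) (μ := (volume : Measure (ℝ×ℝ))) (ν := ν)
    (f := fun q : ℝ×ℝ => uh q.1 * vh q.2) (g := fun _ : ℝ×ℝ => (1:ℂ))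
    Real.continuous_fourierChar Lneg_cont hf (integrable_const 1)
  have hLHS : ∀ ξ : ℝ×ℝ,
      VectorFourier.fourierIntegral Real.fourierChar (volume : Measure (ℝ×ℝ)) Lneg
        (fun q : ℝ×ℝ => uh q.1 * vh q.2) ξ = u ξ.1 * v ξ.2 := by
    intro ξ
    rw [VectorFourier.fourierIntegral]
    have : ∀ x : ℝ×ℝ, Real.fourierChar (-(Lneg x ξ)) • (uh x.1 * vh x.2)
        = (Complex.exp (((2*π*(x.1*ξ.1) : ℝ) : ℂ) * Complex.I) * uh x.1)
          * (Complex.exp (((2*π*(x.2*ξ.2) : ℝ) : ℂ) * Complex.I) * vh x.2) := by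
      intro x
      simp only [Lneg_apply, neg_neg, Circle.smul_def, Real.fourierChar_apply, smul_eq_mul]
      have harg : ((2*π*(x.1*ξ.1 + x.2*ξ.2) : ℝ) : ℂ) * Complex.I
          = ((2*π*(x.1*ξ.1) : ℝ) : ℂ) * Complex.I + ((2*π*(x.2*ξ.2) : ℝ) : ℂ) * Complex.I := by
        push_cast; ring
      have harg2 : ((2 * π * (x.1 * ξ.1 + x.2 * ξ.2) : ℝ) : ℂ)
          = ((2 * π * (x.1*ξ.1) + 2 * π * (x.2*ξ.2) : ℝ) : ℂ) := by push_cast; ring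
      rw [show (2 * π * (x.1 * ξ.1 + x.2 * ξ.2) : ℝ) = 2*π*(x.1*ξ.1) + 2*π*(x.2*ξ.2) by ring]
      rw [Complex.ofReal_add, add_mul, Complex.exp_add]
      ring
    simp_rw [this]
    have hpm := MeasureTheory.integral_prod_mul (μ := (volume : Measure ℝ))
      (ν := (volume : Measure ℝ))
      (f := fun a : ℝ => Complex.exp (((2*π*(a*ξ.1) : ℝ) : ℂ) * Complex.I) * uh a)
      (g := fun a : ℝ => Complex.exp (((2*π*(a*ξ.2) : ℝ) : ℂ) * Complex.I) * vh a)
    rw [Measure.volume_eq_prod, hpm, schwartz_inv, schwartz_inv]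
  have hRHS : ∀ x : ℝ×ℝ,
      (uh x.1 * vh x.2) • VectorFourier.fourierIntegral Real.fourierChar ν Lneg.flip
        (fun _ : ℝ×ℝ => (1:ℂ)) x
      = uh x.1 * vh x.2
          * (∫ p, Complex.exp (((2*π*(x.1*p.1 + x.2*p.2) : ℝ) : ℂ) * Complex.I) ∂ν) := by
    intro x
    rw [VectorFourier.fourierIntegral, smul_eq_mul]
    congr 1
    congr 1
    funext p
    simp only [LinearMap.flip_apply, Lneg_apply, neg_neg, Circle.smul_def,
      Real.fourierChar_apply, smul_eq_mul, mul_one]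
  calc ∫ p, u p.1 * v p.2 ∂ν
      = ∫ ξ, VectorFourier.fourierIntegral Real.fourierChar (volume : Measure (ℝ×ℝ)) Lneg
          (fun q : ℝ×ℝ => uh q.1 * vh q.2) ξ • (1:ℂ) ∂ν := by
        congr 1; ext ξ; rw [hLHS ξ, smul_eq_mul, mul_one]
    _ = ∫ x, (uh x.1 * vh x.2) • VectorFourier.fourierIntegral Real.fourierChar ν Lneg.flip
          (fun _ : ℝ×ℝ => (1:ℂ)) x ∂(volume : Measure (ℝ×ℝ)) := key
    _ = _ := by congr 1; ext x; rw [hRHS x]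

noncomputable def schwartzBump (b : ℝ) (n : ℕ) : SchwartzMap ℝ ℂ :=
  bumpToSchwartz ⇑(bumpSeq b n) ((bumpSeq b n).contDiff) ((bumpSeq b n).hasCompactSupport)

lemma schwartzBump_apply (b : ℝ) (n : ℕ) (x : ℝ) :
    schwartzBump b n x = ((bumpSeq b n x : ℝ) : ℂ) := rfl

lemma schwartzBump_norm_le (b : ℝ) (n : ℕ) (x : ℝ) : ‖schwartzBump b n x‖ ≤ 1 := by
  rw [schwartzBump_apply, Complex.norm_real, Real.norm_eq_abs,
    _root_.abs_of_nonneg (bumpSeq b n).nonneg]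
  exact (bumpSeq b n).le_one

lemma orthant_eq_of_char_eq (ν₁ ν₂ : Measure (ℝ×ℝ))
    [IsProbabilityMeasure ν₁] [IsProbabilityMeasure ν₂]
    (h : ∀ a b : ℝ, (∫ p : ℝ×ℝ, Complex.exp (((a*p.1 + b*p.2 : ℝ) : ℂ) * Complex.I) ∂ν₁)
       = ∫ p : ℝ×ℝ, Complex.exp (((a*p.1 + b*p.2 : ℝ) : ℂ) * Complex.I) ∂ν₂)
    (b₁ b₂ : ℝ) :
    ν₁ {p : ℝ×ℝ | b₁ < p.1 ∧ b₂ < p.2} = ν₂ {p : ℝ×ℝ | b₁ < p.1 ∧ b₂ < p.2} := by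
  set S : Set (ℝ×ℝ) := {p : ℝ×ℝ | b₁ < p.1 ∧ b₂ < p.2} with hSdef
  have hS : MeasurableSet S := by
    have : S = (Prod.fst ⁻¹' Set.Ioi b₁) ∩ (Prod.snd ⁻¹' Set.Ioi b₂) := rfl
    rw [this]
    exact (measurable_fst measurableSet_Ioi).inter (measurable_snd measurableSet_Ioi)
  have hsame : ∀ n : ℕ, (∫ p : ℝ×ℝ, schwartzBump b₁ n p.1 * schwartzBump b₂ n p.2 ∂ν₁)
      = ∫ p : ℝ×ℝ, schwartzBump b₁ n p.1 * schwartzBump b₂ n p.2 ∂ν₂ := by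
    intro n
    rw [integral_tensor_eq, integral_tensor_eq]
    congr 1
    funext q
    congr 1
    have : ∀ p : ℝ×ℝ, (2*π*(q.1*p.1 + q.2*p.2) : ℝ) = ((2*π*q.1)*p.1 + (2*π*q.2)*p.2 : ℝ) :=
      fun p => by ring
    simp_rw [this]
    exact h (2*π*q.1) (2*π*q.2)
  have hindmul : ∀ p : ℝ×ℝ,
      ((Set.indicator (Set.Ioi b₁) (fun _ => (1:ℝ)) p.1 : ℝ) : ℂ)
        * ((Set.indicator (Set.Ioi b₂) (fun _ => (1:ℝ)) p.2 : ℝ) : ℂ)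
      = Set.indicator S (fun _ => (1:ℂ)) p := by
    intro p
    by_cases h1 : b₁ < p.1 <;> by_cases h2 : b₂ < p.2 <;>
      simp [Set.indicator_apply, h1, h2, Set.mem_Ioi, hSdef, Set.mem_setOf_eq]
  have hlim : ∀ (ν : Measure (ℝ×ℝ)), IsProbabilityMeasure ν →
      Tendsto (fun n : ℕ => ∫ p : ℝ×ℝ, schwartzBump b₁ n p.1 * schwartzBump b₂ n p.2 ∂ν)
        atTop (𝓝 (((ν S).toReal : ℂ))) := by
    intro ν hν
    have key := tendsto_integral_of_dominated_convergence (μ := ν)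
      (F := fun n (p : ℝ×ℝ) => schwartzBump b₁ n p.1 * schwartzBump b₂ n p.2)
      (f := fun p : ℝ×ℝ => Set.indicator S (fun _ => (1:ℂ)) p)
      (fun _ => (1:ℝ))
      (fun n => (((schwartzBump b₁ n).continuous.comp continuous_fst).mul
        ((schwartzBump b₂ n).continuous.comp continuous_snd)).aestronglyMeasurable)
      (integrable_const 1)
      (fun n => Filter.Eventually.of_forall fun p => by
        rw [norm_mul]
        calc ‖schwartzBump b₁ n p.1‖ * ‖schwartzBump b₂ n p.2‖
            ≤ 1 * 1 := mul_le_mul (schwartzBump_norm_le b₁ n p.1)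
              (schwartzBump_norm_le b₂ n p.2) (norm_nonneg _) zero_le_one
          _ = 1 := mul_one 1)
      (Filter.Eventually.of_forall fun p => by
        have h1 : Tendsto (fun n : ℕ => schwartzBump b₁ n p.1) atTop
            (𝓝 ((Set.indicator (Set.Ioi b₁) (fun _ => (1:ℝ)) p.1 : ℝ) : ℂ)) :=
          (Complex.continuous_ofReal.tendsto _).comp (bumpSeq_tendsto b₁ p.1)
        have h2 : Tendsto (fun n : ℕ => schwartzBump b₂ n p.2) atTop
            (𝓝 ((Set.indicator (Set.Ioi b₂) (fun _ => (1:ℝ)) p.2 : ℝ) : ℂ)) :=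
          (Complex.continuous_ofReal.tendsto _).comp (bumpSeq_tendsto b₂ p.2)
        have := h1.mul h2
        rwa [hindmul p] at this)
    have : (∫ p : ℝ×ℝ, Set.indicator S (fun _ => (1:ℂ)) p ∂ν) = ((ν S).toReal : ℂ) := by
      rw [integral_indicator_const (1 : ℂ) hS]
      simp
      rfl
    rwa [this] at key
  have t1 := hlim ν₁ inferInstance
  have t2 : Tendsto (fun n : ℕ => ∫ p : ℝ×ℝ, schwartzBump b₁ n p.1 * schwartzBump b₂ n p.2 ∂ν₁)
      atTop (𝓝 (((ν₂ S).toReal : ℂ))) := by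
    have := hlim ν₂ inferInstance
    exact this.congr fun n => (hsame n).symm
  have heq : ((ν₁ S).toReal : ℂ) = ((ν₂ S).toReal : ℂ) := tendsto_nhds_unique t1 t2
  have heq' : (ν₁ S).toReal = (ν₂ S).toReal := by exact_mod_cast heq
  exact (ENNReal.toReal_eq_toReal_iff' (measure_ne_top ν₁ S) (measure_ne_top ν₂ S)).mp heq'
/-- key algebraic inequality -/
lemma key_ineq {ρ ρ' b₂ x : ℝ} (hρ0 : 0 ≤ ρ) (hρ'1 : ρ' < 1) (hmono : ρ ≤ ρ')
    (hb2 : 0 ≤ b₂) (hx : b₂ ≤ x) :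
    (b₂ - ρ'*x)/Real.sqrt (1-ρ'^2) ≤ (b₂ - ρ*x)/Real.sqrt (1-ρ^2) := by
  have hρ1 : ρ < 1 := lt_of_le_of_lt hmono hρ'1
  have hρ'0 : 0 ≤ ρ' := le_trans hρ0 hmono
  set s := Real.sqrt (1-ρ^2) with hsdef
  set s' := Real.sqrt (1-ρ'^2) with hs'def
  have hs : 0 < s := Real.sqrt_pos.mpr (by nlinarith)
  have hs' : 0 < s' := Real.sqrt_pos.mpr (by nlinarith)
  have hs2 : s^2 = 1-ρ^2 := Real.sq_sqrt (by nlinarith)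
  have hs'2 : s'^2 = 1-ρ'^2 := Real.sq_sqrt (by nlinarith)
  have hss' : s' ≤ s := Real.sqrt_le_sqrt (by nlinarith)
  have hkey : s*(1-ρ') ≤ s'*(1-ρ) := by
    have h1 : (s*(1-ρ'))^2 ≤ (s'*(1-ρ))^2 := by
      rw [mul_pow, mul_pow, hs2, hs'2]
      nlinarith [mul_nonneg (mul_nonneg (sub_nonneg.mpr hρ1.le) (sub_nonneg.mpr hρ'1.le))
        (sub_nonneg.mpr hmono)]
    have h2 : 0 ≤ s*(1-ρ') := by nlinarith
    have h3 : 0 ≤ s'*(1-ρ) := by nlinarith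
    calc s*(1-ρ') = Real.sqrt ((s*(1-ρ'))^2) := (Real.sqrt_sq h2).symm
      _ ≤ Real.sqrt ((s'*(1-ρ))^2) := Real.sqrt_le_sqrt h1
      _ = s'*(1-ρ) := Real.sqrt_sq h3
  rw [div_le_div_iff₀ hs' hs]
  have h4 : s - s' ≤ ρ'*s - ρ*s' := by nlinarith
  have h5 : 0 ≤ ρ'*s - ρ*s' := by
    nlinarith [mul_le_mul_of_nonneg_left hss' hρ'0, mul_le_mul_of_nonneg_right hmono hs'.le]
  have h6 : b₂*(s-s') ≤ x*(ρ'*s - ρ*s') :=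
    le_trans (mul_le_mul_of_nonneg_left h4 hb2) (mul_le_mul_of_nonneg_right hx h5)
  nlinarith

/-- The explicit model for the bivariate normal with correlation `ρ`. -/
noncomputable def modelMeasure (ρ : ℝ) : Measure (ℝ×ℝ) :=
  ((gaussianReal 0 1).prod (gaussianReal 0 1)).map
    (fun p : ℝ×ℝ => (p.1, ρ*p.1 + Real.sqrt (1-ρ^2)*p.2))

lemma modelMeasure_measurableT (ρ : ℝ) :
    Measurable (fun p : ℝ×ℝ => (p.1, ρ*p.1 + Real.sqrt (1-ρ^2)*p.2)) := by fun_prop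

instance modelMeasure_prob (ρ : ℝ) : IsProbabilityMeasure (modelMeasure ρ) :=
  Measure.isProbabilityMeasure_map (modelMeasure_measurableT ρ).aemeasurable

lemma modelMeasure_char (ρ : ℝ) (hρ0 : 0 ≤ ρ) (hρ1 : ρ ≤ 1) (a b : ℝ) :
    ∫ p : ℝ×ℝ, Complex.exp (((a*p.1 + b*p.2 : ℝ) : ℂ) * Complex.I) ∂(modelMeasure ρ)
      = Complex.exp (-((a^2 + 2*a*b*ρ + b^2 : ℝ) : ℂ)/2) := by
  set s := Real.sqrt (1-ρ^2) with hsdef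
  have hs2 : s^2 = 1-ρ^2 := Real.sq_sqrt (by nlinarith)
  have hcont : Continuous (fun p : ℝ×ℝ =>
      Complex.exp (((a*p.1 + b*p.2 : ℝ) : ℂ) * Complex.I)) := by fun_prop
  rw [modelMeasure, integral_map (modelMeasure_measurableT ρ).aemeasurable
    hcont.aestronglyMeasurable]
  have hsplit : ∀ p : ℝ×ℝ, Complex.exp (((a*p.1 + b*(ρ*p.1 + s*p.2) : ℝ) : ℂ) * Complex.I)
      = Complex.exp ((((a + b*ρ) : ℝ) : ℂ) * (p.1 : ℂ) * Complex.I)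
        * Complex.exp ((((b*s) : ℝ) : ℂ) * (p.2 : ℂ) * Complex.I) := by
    intro p
    rw [← Complex.exp_add]
    congr 1
    push_cast
    ring
  simp only
  rw [← hsdef]
  simp_rw [hsplit]
  have hpm := MeasureTheory.integral_prod_mul (μ := gaussianReal 0 1) (ν := gaussianReal 0 1)
    (f := fun x : ℝ => Complex.exp ((((a + b*ρ) : ℝ) : ℂ) * (x:ℂ) * Complex.I))
    (g := fun x : ℝ => Complex.exp ((((b*s) : ℝ) : ℂ) * (x:ℂ) * Complex.I))
  rw [hpm, integral_cexp_gaussianReal, integral_cexp_gaussianReal, ← Complex.exp_add]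
  congr 1
  have hbs : ((b*s)^2 : ℝ) = b^2*(1-ρ^2) := by rw [mul_pow, hs2]
  have : (((1:ℝ≥0)):ℝ) = (1:ℝ) := rfl
  rw [this]
  have hr : (-(1:ℝ) * (a + b*ρ)^2/2) + (-(1:ℝ) * (b*s)^2/2)
      = -((a^2 + 2*a*b*ρ + b^2 : ℝ))/2 := by rw [hbs]; ring
  have hs2c : ((s:ℝ):ℂ)^2 = 1 - (ρ:ℂ)^2 := by exact_mod_cast hs2
  push_cast
  linear_combination (-((b:ℂ)^2)/2) * hs2c
/-- `(Z₁, Z₂)` is bivariate normal with standard normal margins and correlation `ρ`. -/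
def IsStdBivNormal {Ω : Type*} [MeasurableSpace Ω] (P : Measure Ω)
    (Z₁ Z₂ : Ω → ℝ) (ρ : ℝ) : Prop :=
  ∀ a b : ℝ, P.map (fun ω => a * Z₁ ω + b * Z₂ ω) =
    gaussianReal 0 (a ^ 2 + 2 * a * b * ρ + b ^ 2).toNNReal

lemma modelMeasure_orth (ρ : ℝ) (hρ0 : 0 ≤ ρ) (hρ1 : ρ < 1) (b₁ b₂ : ℝ) :
    modelMeasure ρ {p : ℝ×ℝ | b₁ < p.1 ∧ b₂ < p.2}
      = ∫⁻ x, Set.indicator (Set.Ioi b₁)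
          (fun x => gaussianReal 0 1 (Set.Ioi ((b₂ - ρ*x)/Real.sqrt (1-ρ^2)))) x
          ∂(gaussianReal 0 1) := by
  set s := Real.sqrt (1-ρ^2) with hsdef
  have hs : 0 < s := Real.sqrt_pos.mpr (by nlinarith)
  have hSmeas : MeasurableSet {p : ℝ×ℝ | b₁ < p.1 ∧ b₂ < p.2} := by
    have : {p : ℝ×ℝ | b₁ < p.1 ∧ b₂ < p.2}
        = (Prod.fst ⁻¹' Set.Ioi b₁) ∩ (Prod.snd ⁻¹' Set.Ioi b₂) := rfl
    rw [this]
    exact (measurable_fst measurableSet_Ioi).inter (measurable_snd measurableSet_Ioi)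
  rw [modelMeasure, Measure.map_apply (modelMeasure_measurableT ρ) hSmeas]
  have hpre : (fun p : ℝ×ℝ => (p.1, ρ*p.1 + s*p.2)) ⁻¹' {p : ℝ×ℝ | b₁ < p.1 ∧ b₂ < p.2}
      = {p : ℝ×ℝ | b₁ < p.1 ∧ b₂ < ρ*p.1 + s*p.2} := rfl
  have hmeas2 : MeasurableSet {p : ℝ×ℝ | b₁ < p.1 ∧ b₂ < ρ*p.1 + s*p.2} := by
    have : {p : ℝ×ℝ | b₁ < p.1 ∧ b₂ < ρ*p.1 + s*p.2}
        = (Prod.fst ⁻¹' Set.Ioi b₁) ∩ {p : ℝ×ℝ | b₂ < ρ*p.1 + s*p.2} := rfl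
    rw [this]
    refine (measurable_fst measurableSet_Ioi).inter ?_
    exact measurableSet_lt measurable_const (by fun_prop)
  rw [hpre, Measure.prod_apply hmeas2]
  congr 1
  funext x
  by_cases hx : x ∈ Set.Ioi b₁
  · rw [Set.indicator_of_mem hx]
    congr 1
    ext y
    simp only [Set.mem_preimage, Set.mem_setOf_eq, Set.mem_Ioi]
    have hx' : b₁ < x := hx
    constructor
    · rintro ⟨-, h2⟩
      rw [div_lt_iff₀ hs]
      nlinarith
    · intro hy
      rw [div_lt_iff₀ hs] at hy
      exact ⟨hx', by nlinarith⟩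
  · rw [Set.indicator_of_notMem hx]
    have : (Prod.mk x ⁻¹' {p : ℝ×ℝ | b₁ < p.1 ∧ b₂ < ρ*p.1 + s*p.2}) = ∅ := by
      ext y
      simp only [Set.mem_preimage, Set.mem_setOf_eq, Set.mem_empty_iff_false, iff_false]
      rintro ⟨h1, -⟩
      exact hx h1
    rw [this]
    exact measure_empty

lemma modelMeasure_mono {ρ ρ' : ℝ} (hρ0 : 0 ≤ ρ) (hρ1 : ρ < 1) (hρ'0 : 0 ≤ ρ') (hρ'1 : ρ' < 1)
    (hmono : ρ ≤ ρ') {b₁ b₂ : ℝ} (hb₂ : 0 ≤ b₂) (hb : b₂ ≤ b₁) :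
    modelMeasure ρ {p : ℝ×ℝ | b₁ < p.1 ∧ b₂ < p.2}
      ≤ modelMeasure ρ' {p : ℝ×ℝ | b₁ < p.1 ∧ b₂ < p.2} := by
  rw [modelMeasure_orth ρ hρ0 hρ1 b₁ b₂, modelMeasure_orth ρ' hρ'0 hρ'1 b₁ b₂]
  apply lintegral_mono
  intro x
  by_cases hx : x ∈ Set.Ioi b₁
  · rw [Set.indicator_of_mem hx, Set.indicator_of_mem hx]
    apply measure_mono
    apply Set.Ioi_subset_Ioi
    exact key_ineq hρ0 hρ'1 hmono hb₂ (le_trans hb (le_of_lt hx))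
  · rw [Set.indicator_of_notMem hx, Set.indicator_of_notMem hx]

lemma IsStdBivNormal.comb_aemeasurable {Ω : Type*} [MeasurableSpace Ω] {P : Measure Ω}
    {Z₁ Z₂ : Ω → ℝ} {ρ : ℝ} (hZ : IsStdBivNormal P Z₁ Z₂ ρ) (a b : ℝ) :
    AEMeasurable (fun ω => a * Z₁ ω + b * Z₂ ω) P := by
  by_contra hc
  have h := hZ a b
  rw [Measure.map_of_not_aemeasurable hc] at h
  have h1 : gaussianReal 0 (a ^ 2 + 2 * a * b * ρ + b ^ 2).toNNReal Set.univ = 1 :=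
    measure_univ
  rw [← h] at h1
  simp at h1

lemma IsStdBivNormal.aemeasurable_fst {Ω : Type*} [MeasurableSpace Ω] {P : Measure Ω}
    {Z₁ Z₂ : Ω → ℝ} {ρ : ℝ} (hZ : IsStdBivNormal P Z₁ Z₂ ρ) : AEMeasurable Z₁ P := by
  have := hZ.comb_aemeasurable 1 0
  simpa using this

lemma IsStdBivNormal.aemeasurable_snd {Ω : Type*} [MeasurableSpace Ω] {P : Measure Ω}
    {Z₁ Z₂ : Ω → ℝ} {ρ : ℝ} (hZ : IsStdBivNormal P Z₁ Z₂ ρ) : AEMeasurable Z₂ P := by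
  have := hZ.comb_aemeasurable 0 1
  simpa using this

lemma IsStdBivNormal.char {Ω : Type*} [MeasurableSpace Ω] {P : Measure Ω}
    [IsProbabilityMeasure P] {Z₁ Z₂ : Ω → ℝ} {ρ : ℝ} (hZ : IsStdBivNormal P Z₁ Z₂ ρ)
    (hρ0 : 0 ≤ ρ) (hρ1 : ρ ≤ 1) (a b : ℝ) :
    ∫ p : ℝ×ℝ, Complex.exp (((a*p.1 + b*p.2 : ℝ) : ℂ) * Complex.I)
        ∂(P.map (fun ω => (Z₁ ω, Z₂ ω)))
      = Complex.exp (-((a^2 + 2*a*b*ρ + b^2 : ℝ) : ℂ)/2) := by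
  have hpair : AEMeasurable (fun ω => (Z₁ ω, Z₂ ω)) P :=
    hZ.aemeasurable_fst.prodMk hZ.aemeasurable_snd
  have hcont : Continuous (fun p : ℝ×ℝ =>
      Complex.exp (((a*p.1 + b*p.2 : ℝ) : ℂ) * Complex.I)) := by fun_prop
  rw [integral_map hpair hcont.aestronglyMeasurable]
  have hcomb := hZ.comb_aemeasurable a b
  have hcont1 : Continuous (fun x : ℝ => Complex.exp (((1:ℝ):ℂ) * (x : ℂ) * Complex.I)) := by
    fun_prop
  have hstep : (∫ ω, Complex.exp (((a * Z₁ ω + b * Z₂ ω : ℝ) : ℂ) * Complex.I) ∂P)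
      = ∫ x : ℝ, Complex.exp (((1:ℝ):ℂ) * (x:ℂ) * Complex.I)
          ∂(P.map (fun ω => a * Z₁ ω + b * Z₂ ω)) := by
    rw [integral_map hcomb hcont1.aestronglyMeasurable]
    congr 1
    funext ω
    norm_num
  simp only
  rw [hstep, hZ a b, integral_cexp_gaussianReal]
  have hq : (0:ℝ) ≤ a^2 + 2*a*b*ρ + b^2 := by
    nlinarith [sq_nonneg (a + b*ρ), mul_nonneg (sq_nonneg b)
      (sub_nonneg.mpr (by nlinarith : ρ^2 ≤ 1))]
  have hcoe : (((a ^ 2 + 2 * a * b * ρ + b ^ 2).toNNReal : ℝ)) = a^2 + 2*a*b*ρ + b^2 :=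
    Real.coe_toNNReal _ hq
  rw [hcoe]
  push_cast
  ring_nf

theorem orthant_prob_mono_in_correlation'
    {Ω Ω' : Type*} [MeasurableSpace Ω] [MeasurableSpace Ω']
    (P : Measure Ω) (P' : Measure Ω')
    [IsProbabilityMeasure P] [IsProbabilityMeasure P']
    (Z₁ Z₂ : Ω → ℝ) (Z₁' Z₂' : Ω' → ℝ) (ρ ρ' : ℝ)
    (hZ : IsStdBivNormal P Z₁ Z₂ ρ) (hZ' : IsStdBivNormal P' Z₁' Z₂' ρ')
    (hρ0 : 0 ≤ ρ) (hρ1 : ρ < 1) (hρ'0 : 0 ≤ ρ') (hρ'1 : ρ' < 1)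
    (hmono : ρ ≤ ρ') (b₁ b₂ : ℝ) (hb₂ : 0 ≤ b₂) (hb : b₂ ≤ b₁) :
    P {ω | b₁ < Z₁ ω ∧ b₂ < Z₂ ω} ≤ P' {ω | b₁ < Z₁' ω ∧ b₂ < Z₂' ω} := by
  have hSmeas : MeasurableSet {p : ℝ×ℝ | b₁ < p.1 ∧ b₂ < p.2} := by
    have : {p : ℝ×ℝ | b₁ < p.1 ∧ b₂ < p.2}
        = (Prod.fst ⁻¹' Set.Ioi b₁) ∩ (Prod.snd ⁻¹' Set.Ioi b₂) := rfl
    rw [this]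
    exact (measurable_fst measurableSet_Ioi).inter (measurable_snd measurableSet_Ioi)
  have hpair : AEMeasurable (fun ω => (Z₁ ω, Z₂ ω)) P :=
    hZ.aemeasurable_fst.prodMk hZ.aemeasurable_snd
  have hpair' : AEMeasurable (fun ω => (Z₁' ω, Z₂' ω)) P' :=
    hZ'.aemeasurable_fst.prodMk hZ'.aemeasurable_snd
  have : IsProbabilityMeasure (P.map (fun ω => (Z₁ ω, Z₂ ω))) :=
    Measure.isProbabilityMeasure_map hpair
  have : IsProbabilityMeasure (P'.map (fun ω => (Z₁' ω, Z₂' ω))) :=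
    Measure.isProbabilityMeasure_map hpair'
  have h1 : P {ω | b₁ < Z₁ ω ∧ b₂ < Z₂ ω}
      = (P.map (fun ω => (Z₁ ω, Z₂ ω))) {p : ℝ×ℝ | b₁ < p.1 ∧ b₂ < p.2} :=
    (Measure.map_apply_of_aemeasurable hpair hSmeas).symm
  have h1' : P' {ω | b₁ < Z₁' ω ∧ b₂ < Z₂' ω}
      = (P'.map (fun ω => (Z₁' ω, Z₂' ω))) {p : ℝ×ℝ | b₁ < p.1 ∧ b₂ < p.2} :=
    (Measure.map_apply_of_aemeasurable hpair' hSmeas).symm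
  have h2 : (P.map (fun ω => (Z₁ ω, Z₂ ω))) {p : ℝ×ℝ | b₁ < p.1 ∧ b₂ < p.2}
      = modelMeasure ρ {p : ℝ×ℝ | b₁ < p.1 ∧ b₂ < p.2} := by
    apply orthant_eq_of_char_eq
    intro a b
    rw [hZ.char hρ0 hρ1.le a b, modelMeasure_char ρ hρ0 hρ1.le a b]
  have h2' : (P'.map (fun ω => (Z₁' ω, Z₂' ω))) {p : ℝ×ℝ | b₁ < p.1 ∧ b₂ < p.2}
      = modelMeasure ρ' {p : ℝ×ℝ | b₁ < p.1 ∧ b₂ < p.2} := by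
    apply orthant_eq_of_char_eq
    intro a b
    rw [hZ'.char hρ'0 hρ'1.le a b, modelMeasure_char ρ' hρ'0 hρ'1.le a b]
  rw [h1, h1', h2, h2']
  exact modelMeasure_mono hρ0 hρ1 hρ'0 hρ'1 hmono hb₂ hb

/-- The bivariate normal upper orthant probability `P(Z₁ > b₁, Z₂ > b₂)` with
`0 ≤ b₂ ≤ b₁` is monotone nondecreasing in the correlation `ρ ∈ [0,1)`. -/
theorem orthant_prob_mono_in_correlation
    {Ω Ω' : Type*} [MeasurableSpace Ω] [MeasurableSpace Ω']
    (P : Measure Ω) (P' : Measure Ω')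
    [IsProbabilityMeasure P] [IsProbabilityMeasure P']
    (Z₁ Z₂ : Ω → ℝ) (Z₁' Z₂' : Ω' → ℝ) (ρ ρ' : ℝ)
    (hZ : IsStdBivNormal P Z₁ Z₂ ρ) (hZ' : IsStdBivNormal P' Z₁' Z₂' ρ')
    (hρ0 : 0 ≤ ρ) (hρ1 : ρ < 1) (hρ'0 : 0 ≤ ρ') (hρ'1 : ρ' < 1)
    (hmono : ρ ≤ ρ') (b₁ b₂ : ℝ) (hb₂ : 0 ≤ b₂) (hb : b₂ ≤ b₁) :
    P {ω | b₁ < Z₁ ω ∧ b₂ < Z₂ ω} ≤ P' {ω | b₁ < Z₁' ω ∧ b₂ < Z₂' ω} :=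
  orthant_prob_mono_in_correlation' P P' Z₁ Z₂ Z₁' Z₂' ρ ρ' hZ hZ'
    hρ0 hρ1 hρ'0 hρ'1 hmono b₁ b₂ hb₂ hb
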